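/- With the same setup, for any D_r ∈ ℂ^{p×m}, the perturbed model G_r^{D_r} also satisfies the left tangential interpolation conditions: c_i^T G(μ_i) = c_i^T G_r^{D_r}(μ_i) for each i. -/

import Mathlib

open Matrix

/-- The `D_r`-shifted reduced model built on primitive interpolatory bases satisfies
the same left tangential interpolation conditions for every `D_r`. -/
theorem shifted_model_left_interpolation
    {n m p r : ℕ}
    (E A : Matrix (Fin n) (Fin n) ℂ) (B : Matrix (Fin n) (Fin m) ℂ)
    (C : Matrix (Fin p) (Fin n) ℂ)
    (σ μ : Fin r → ℂ) (b : Fin r → Fin m → ℂ) (c : Fin r → Fin p → ℂ)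
    (hσ : ∀ i, IsUnit (A - σ i • E)) (hμ : ∀ i, IsUnit (A - μ i • E))
    (V W : Matrix (Fin n) (Fin r) ℂ)
    (hV : ∀ i j, V j i = ((A - σ i • E)⁻¹ *ᵥ (B *ᵥ b i)) j)
    (hW : ∀ i j, W j i = (((A - μ i • E)ᵀ)⁻¹ *ᵥ (Cᵀ *ᵥ c i)) j)
    (R : Matrix (Fin m) (Fin r) ℂ) (L : Matrix (Fin p) (Fin r) ℂ)
    (hR : ∀ k i, R k i = b i k) (hL : ∀ k i, L k i = c i k)
    (Dr : Matrix (Fin p) (Fin m) ℂ)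
    (hinv : ∀ i, IsUnit (μ i • (Wᵀ * E * V) - (Wᵀ * A * V + Lᵀ * Dr * R))) :
    ∀ i, c i ᵥ* (C * (μ i • E - A)⁻¹ * B)
      = c i ᵥ* ((C * V + Dr * R) * (μ i • (Wᵀ * E * V) - (Wᵀ * A * V + Lᵀ * Dr * R))⁻¹ *
          (Wᵀ * B + Lᵀ * Dr) + Dr) := by
  intro i
  set K : Matrix (Fin n) (Fin n) ℂ := μ i • E - A with hKdef
  have hKeq : K = -(A - μ i • E) := by rw [hKdef, neg_sub]
  have hKu : IsUnit K := by rw [hKeq]; exact (hμ i).neg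
  have hKdet : IsUnit K.det := (Matrix.isUnit_iff_isUnit_det K).mp hKu
  set Kr : Matrix (Fin r) (Fin r) ℂ :=
    μ i • (Wᵀ * E * V) - (Wᵀ * A * V + Lᵀ * Dr * R) with hKrdef
  have hKrdet : IsUnit Kr.det := (Matrix.isUnit_iff_isUnit_det Kr).mp (hinv i)
  set w : Fin n → ℂ := fun j => W j i with hwdef
  set u : Fin r → ℂ := Pi.single i (1 : ℂ) with hudef
  -- w is the i-th column of W
  have hwW : w = u ᵥ* Wᵀ := by
    funext j
    simp [hwdef, hudef, Matrix.single_one_vecMul, Matrix.transpose_apply]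
  have hcL : c i = u ᵥ* Lᵀ := by
    funext k
    simp [hudef, Matrix.single_one_vecMul, Matrix.transpose_apply, hL]
  -- key relation : c i ᵥ* C = -(w ᵥ* K)
  have hMu : IsUnit ((A - μ i • E)ᵀ).det := by
    rw [Matrix.det_transpose]
    exact (Matrix.isUnit_iff_isUnit_det _).mp (hμ i)
  have hw0 : w = ((A - μ i • E)ᵀ)⁻¹ *ᵥ (Cᵀ *ᵥ c i) := funext fun j => hW i j
  have hw1 : (A - μ i • E)ᵀ *ᵥ w = Cᵀ *ᵥ c i := by
    rw [hw0, Matrix.mulVec_mulVec, Matrix.mul_nonsing_inv _ hMu, Matrix.one_mulVec]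
  have hkey : c i ᵥ* C = -(w ᵥ* K) := by
    have : w ᵥ* (A - μ i • E) = c i ᵥ* C := by
      rw [← Matrix.mulVec_transpose, hw1, Matrix.mulVec_transpose]
    rw [hKeq, Matrix.vecMul_neg, this, neg_neg]
  -- LHS
  have hLHS : c i ᵥ* (C * K⁻¹ * B) = -(w ᵥ* B) := by
    rw [← Matrix.vecMul_vecMul, ← Matrix.vecMul_vecMul, hkey, Matrix.neg_vecMul,
      Matrix.vecMul_vecMul, Matrix.mul_nonsing_inv _ hKdet, Matrix.vecMul_one,
      Matrix.neg_vecMul]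
  -- c i ᵥ* (C * V + Dr * R) = -(u ᵥ* Kr)
  have hX : c i ᵥ* (C * V + Dr * R) = -(u ᵥ* Kr) := by
    have h1 : c i ᵥ* (C * V) = -(u ᵥ* (Wᵀ * K * V)) := by
      rw [← Matrix.vecMul_vecMul, hkey, Matrix.neg_vecMul, hwW,
        Matrix.vecMul_vecMul, Matrix.vecMul_vecMul, Matrix.mul_assoc]
    have h2 : c i ᵥ* (Dr * R) = u ᵥ* (Lᵀ * Dr * R) := by
      rw [hcL, Matrix.vecMul_vecMul, Matrix.mul_assoc]
    have h3 : Wᵀ * K * V = μ i • (Wᵀ * E * V) - Wᵀ * A * V := by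
      rw [hKdef]
      rw [Matrix.mul_sub, Matrix.sub_mul, Matrix.mul_smul, Matrix.smul_mul]
    rw [Matrix.vecMul_add, h1, h2, h3, hKrdef]
    rw [Matrix.vecMul_sub, Matrix.vecMul_sub, Matrix.vecMul_add]
    abel
  -- RHS
  have hRHS : c i ᵥ* ((C * V + Dr * R) * Kr⁻¹ * (Wᵀ * B + Lᵀ * Dr) + Dr)
      = -(w ᵥ* B) := by
    rw [Matrix.vecMul_add, ← Matrix.vecMul_vecMul, ← Matrix.vecMul_vecMul, hX,
      Matrix.neg_vecMul, Matrix.vecMul_vecMul, Matrix.mul_nonsing_inv _ hKrdet,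
      Matrix.vecMul_one, Matrix.neg_vecMul, Matrix.vecMul_add, hcL,
      Matrix.vecMul_vecMul, hwW, Matrix.vecMul_vecMul]
    abel
  rw [hLHS, hRHS]
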